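/- (Block generalized Rayleigh quotient bound) Let A and B be Hermitian M×M matrices with B positive definite, and let λ₁ ≥ λ₂ ≥ … ≥ λ_M be the generalized eigenvalues of the pencil (A, B) (i.e., the eigenvalues of B^{-1/2} A B^{-1/2}). Then for every full-column-rank matrix V ∈ ℂ^{M×T}, tr((VᴴBV)⁻¹ VᴴAV) ≤ λ₁ + λ₂ + … + λ_T. -/

import Mathlib

open Matrix
open scoped ComplexOrder

/-- The square root of a positive semidefinite matrix (removed from Mathlib; old definition). -/
noncomputable def Matrix.PosSemidef.sqrt {n 𝕜 : Type*} [Fintype n] [RCLike 𝕜] [DecidableEq n]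
    {A : Matrix n n 𝕜} (hA : A.PosSemidef) : Matrix n n 𝕜 :=
  hA.1.eigenvectorUnitary.1 * diagonal ((↑) ∘ Real.sqrt ∘ hA.1.eigenvalues) *
    (star hA.1.eigenvectorUnitary : Matrix n n 𝕜)

lemma Matrix.PosSemidef.posSemidef_sqrt {n 𝕜 : Type*} [Fintype n] [RCLike 𝕜] [DecidableEq n]
    {A : Matrix n n 𝕜} (hA : A.PosSemidef) : hA.sqrt.PosSemidef := by
  have hd : (diagonal ((↑) ∘ Real.sqrt ∘ hA.1.eigenvalues) : Matrix n n 𝕜).PosSemidef := by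
    rw [Matrix.posSemidef_diagonal_iff]
    intro i
    simp only [Function.comp_apply]
    exact RCLike.ofReal_nonneg.mpr (Real.sqrt_nonneg _)
  have := hd.mul_mul_conjTranspose_same (hA.1.eigenvectorUnitary.1)
  rw [Matrix.PosSemidef.sqrt, ← Matrix.star_eq_conjTranspose] at *
  exact this

lemma Matrix.PosSemidef.sqrt_mul_self {n 𝕜 : Type*} [Fintype n] [RCLike 𝕜] [DecidableEq n]
    {A : Matrix n n 𝕜} (hA : A.PosSemidef) : hA.sqrt * hA.sqrt = A := by
  have hU : (star hA.1.eigenvectorUnitary : Matrix n n 𝕜) * hA.1.eigenvectorUnitary.1 = 1 :=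
    Unitary.coe_star_mul_self _
  have hD : (diagonal ((↑) ∘ Real.sqrt ∘ hA.1.eigenvalues) : Matrix n n 𝕜) *
      diagonal ((↑) ∘ Real.sqrt ∘ hA.1.eigenvalues) =
      diagonal (RCLike.ofReal ∘ hA.1.eigenvalues) := by
    rw [diagonal_mul_diagonal]; congr 1; funext i
    simp only [Function.comp_apply, ← RCLike.ofReal_mul,
      Real.mul_self_sqrt (hA.eigenvalues_nonneg i)]
  conv_rhs => rw [hA.1.spectral_theorem, Unitary.conjStarAlgAut_apply]
  rw [Matrix.PosSemidef.sqrt, ← hD]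
  calc _ = (hA.1.eigenvectorUnitary.1 : Matrix n n 𝕜) *
        (diagonal ((↑) ∘ Real.sqrt ∘ hA.1.eigenvalues) *
          ((star hA.1.eigenvectorUnitary : Matrix n n 𝕜) * hA.1.eigenvectorUnitary.1) *
          diagonal ((↑) ∘ Real.sqrt ∘ hA.1.eigenvalues)) *
        (star hA.1.eigenvectorUnitary : Matrix n n 𝕜) := by simp only [Matrix.mul_assoc]
    _ = _ := by rw [hU, Matrix.mul_one, Matrix.mul_assoc]

lemma card_filter_lt_aux {M T : ℕ} (hTM : T ≤ M) :
    (Finset.univ.filter (fun i : Fin M => (i : ℕ) < T)).card = T := by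
  rcases eq_or_lt_of_le hTM with h | h
  · subst h
    simp [Finset.filter_true_of_mem (fun (i : Fin _) _ => i.isLt)]
  · have : (Finset.univ.filter (fun i : Fin M => (i : ℕ) < T))
        = Finset.Iio (⟨T, h⟩ : Fin M) := by
      ext i; simp [Fin.lt_def]
    rw [this, Fin.card_Iio]

/-- Abel-summation style inequality behind the Ky Fan principle. -/
lemma keyfan_real_aux {M T : ℕ} (hTM : T ≤ M) (lam t : Fin M → ℝ)
    (hdec : ∀ i j : Fin M, i ≤ j → lam j ≤ lam i)
    (h0 : ∀ i, 0 ≤ t i) (h1 : ∀ i, t i ≤ 1)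
    (hsum : ∑ i, t i = T) :
    ∑ i, lam i * t i ≤ ∑ i ∈ Finset.univ.filter (fun i : Fin M => (i : ℕ) < T), lam i := by
  set ind : Fin M → ℝ := fun i => if (i : ℕ) < T then 1 else 0 with hind
  have hindsum : ∑ i, ind i = T := by
    simp only [hind, Finset.sum_ite, Finset.sum_const, Finset.sum_const_zero, add_zero,
      nsmul_eq_mul, mul_one, mul_zero, card_filter_lt_aux hTM]
  have hrhs : ∑ i ∈ Finset.univ.filter (fun i : Fin M => (i : ℕ) < T), lam i
      = ∑ i, lam i * ind i := by
    rw [Finset.sum_filter]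
    refine Finset.sum_congr rfl fun i _ => ?_
    simp only [hind]; split <;> simp_all
  rw [hrhs]
  obtain ⟨c, hc1, hc2⟩ : ∃ c : ℝ, (∀ i : Fin M, (i : ℕ) < T → c ≤ lam i) ∧
      (∀ i : Fin M, ¬ (i : ℕ) < T → lam i ≤ c) := by
    rcases lt_or_ge T M with h | h
    · refine ⟨lam ⟨T, h⟩, fun i hi => hdec i ⟨T, h⟩ ?_, fun i hi => hdec ⟨T, h⟩ i ?_⟩
      · exact Fin.le_def.mpr (le_of_lt hi)
      · exact Fin.le_def.mpr (le_of_not_gt hi)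
    · rcases Nat.eq_zero_or_pos M with hM | hM
      · exact ⟨0, fun i => absurd (i.isLt) (by omega), fun i => absurd i.isLt (by omega)⟩
      · refine ⟨lam ⟨M - 1, by omega⟩, fun i _ => hdec i _
          (by rw [Fin.le_def]; simp only [Fin.val_mk]; have := i.isLt; omega), ?_⟩
        intro i hi; exact absurd (lt_of_lt_of_le i.isLt h) hi
  have key : ∑ i, (lam i - c) * (t i - ind i) ≤ 0 := by
    apply Finset.sum_nonpos
    intro i _
    by_cases hi : (i : ℕ) < T
    · have : ind i = 1 := by simp [hind, hi]
      rw [this]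
      exact mul_nonpos_of_nonneg_of_nonpos (by linarith [hc1 i hi]) (by linarith [h1 i])
    · have : ind i = 0 := by simp [hind, hi]
      rw [this]
      exact mul_nonpos_of_nonpos_of_nonneg (by linarith [hc2 i hi]) (by linarith [h0 i])
  have expand : ∑ i, (lam i - c) * (t i - ind i)
      = ∑ i, lam i * t i - ∑ i, lam i * ind i - c * (∑ i, t i - ∑ i, ind i) := by
    simp only [sub_mul, mul_sub, Finset.sum_sub_distrib, Finset.mul_sum]
    ring
  rw [expand, hsum, hindsum] at key
  linarith

lemma posDef_of_posSemidef_isUnit_aux {n : Type*} [Fintype n] [DecidableEq n]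
    {S : Matrix n n ℂ} (h : S.PosSemidef) (hu : IsUnit S) : S.PosDef := by
  refine Matrix.PosDef.of_dotProduct_mulVec_pos h.1 fun ⦃x⦄ hx =>
    lt_of_le_of_ne (h.dotProduct_mulVec_nonneg x) fun he => hx ?_
  have h0 : S *ᵥ x = 0 := (h.dotProduct_mulVec_zero_iff x).mp he.symm
  exact Matrix.mulVec_injective_iff_isUnit.mpr hu (h0.trans (Matrix.mulVec_zero S).symm)

lemma mulVec_injective_of_rank_aux {M T : ℕ} (V : Matrix (Fin M) (Fin T) ℂ)
    (hV : V.rank = T) : Function.Injective V.mulVec := by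
  have h := LinearMap.finrank_range_add_finrank_ker V.mulVecLin
  rw [show Module.finrank ℂ (LinearMap.range V.mulVecLin) = V.rank from rfl, hV] at h
  simp only [Module.finrank_fin_fun] at h
  have hker : LinearMap.ker V.mulVecLin = ⊥ :=
    Submodule.finrank_eq_zero.mp (by omega)
  have := LinearMap.ker_eq_bot.mp hker
  exact this

theorem stmt2 (M T : ℕ) (hTM : T ≤ M) (A B : Matrix (Fin M) (Fin M) ℂ)
    (hA : A.IsHermitian) (hB : B.PosDef)
    (lam : Fin M → ℝ) (hdec : ∀ i j : Fin M, i ≤ j → lam j ≤ lam i)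
    (U : Matrix (Fin M) (Fin M) ℂ) (hU : U ∈ Matrix.unitaryGroup (Fin M) ℂ)
    (hC : hB.posSemidef.sqrt⁻¹ * A * hB.posSemidef.sqrt⁻¹ =
      U * Matrix.diagonal (fun i => (lam i : ℂ)) * Uᴴ)
    (V : Matrix (Fin M) (Fin T) ℂ) (hV : V.rank = T) :
    Matrix.trace ((Vᴴ * B * V)⁻¹ * (Vᴴ * A * V)) ≤
      ((∑ i ∈ Finset.univ.filter (fun i : Fin M => (i : ℕ) < T), lam i : ℝ) : ℂ) := by
  classical
  set S : Matrix (Fin M) (Fin M) ℂ := hB.posSemidef.sqrt with hSdef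
  set D : Matrix (Fin M) (Fin M) ℂ := Matrix.diagonal (fun i => (lam i : ℂ)) with hDdef
  have hS : S.PosSemidef := hB.posSemidef.posSemidef_sqrt
  have hSS : S * S = B := hB.posSemidef.sqrt_mul_self
  have hSdetu : IsUnit S.det := by
    have h1 : S.det * S.det = B.det := by rw [← Matrix.det_mul, hSS]
    exact (fun h : S.det ≠ 0 => h.isUnit) fun h => hB.det_pos.ne' (by rw [← h1, h, mul_zero])
  have hSH : Sᴴ = S := hS.1
  set G : Matrix (Fin T) (Fin T) ℂ := Vᴴ * B * V with hGdef
  have hVinj : Function.Injective V.mulVec := mulVec_injective_of_rank_aux V hV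
  have hG : G.PosDef := by
    refine Matrix.PosDef.of_dotProduct_mulVec_pos
      (Matrix.isHermitian_conjTranspose_mul_mul V hB.isHermitian) fun ⦃x⦄ hx => ?_
    have hVx : V *ᵥ x ≠ 0 := fun h => hx (hVinj (h.trans (Matrix.mulVec_zero V).symm))
    have h2 := hB.dotProduct_mulVec_pos hVx
    rw [hGdef, ← Matrix.mulVec_mulVec, ← Matrix.mulVec_mulVec, Matrix.dotProduct_mulVec,
      ← Matrix.star_mulVec]
    exact h2
  have hGdet : IsUnit G.det := (Matrix.isUnit_iff_isUnit_det G).mp hG.isUnit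
  have hGi : (G⁻¹).PosDef := hG.inv
  set R : Matrix (Fin T) (Fin T) ℂ := hGi.posSemidef.sqrt with hRdef
  have hRps : R.PosSemidef := hGi.posSemidef.posSemidef_sqrt
  have hRR : R * R = G⁻¹ := hGi.posSemidef.sqrt_mul_self
  have hRdet : IsUnit R.det := by
    have h1 : R.det * R.det = (G⁻¹).det := by rw [← Matrix.det_mul, hRR]
    have h2 : (G⁻¹).det ≠ 0 := hGi.det_pos.ne'
    exact (fun h : R.det ≠ 0 => h.isUnit) fun h => h2 (by rw [← h1, h, mul_zero])
  have hRGR : R * G * R = 1 := by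
    have hGeq : G = R⁻¹ * R⁻¹ := by
      rw [← Matrix.mul_inv_rev, hRR, Matrix.nonsing_inv_nonsing_inv _ hGdet]
    rw [hGeq]
    calc R * (R⁻¹ * R⁻¹) * R = (R * R⁻¹) * (R⁻¹ * R) := by simp only [Matrix.mul_assoc]
    _ = 1 := by rw [Matrix.mul_nonsing_inv _ hRdet, Matrix.nonsing_inv_mul _ hRdet, one_mul]
  set W : Matrix (Fin M) (Fin T) ℂ := S * V with hWdef
  have hWH : Wᴴ = Vᴴ * S := by rw [hWdef, Matrix.conjTranspose_mul, hSH]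
  have hWW : Wᴴ * W = G := by
    rw [hWH, hWdef, hGdef, Matrix.mul_assoc, ← Matrix.mul_assoc S S V, hSS, ← Matrix.mul_assoc]
  set Q : Matrix (Fin M) (Fin T) ℂ := W * R with hQdef
  have hQH : Qᴴ = R * Wᴴ := by rw [hQdef, Matrix.conjTranspose_mul, hRps.1]
  have hQQ : Qᴴ * Q = 1 := by
    rw [hQH, hQdef, Matrix.mul_assoc, ← Matrix.mul_assoc Wᴴ W R, hWW, ← Matrix.mul_assoc, hRGR]
  set K : Matrix (Fin M) (Fin T) ℂ := Uᴴ * Q with hKdef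
  have hKH : Kᴴ = Qᴴ * U := by
    rw [hKdef, Matrix.conjTranspose_mul, Matrix.conjTranspose_conjTranspose]
  have hUU : U * Uᴴ = 1 := by
    have := Matrix.mem_unitaryGroup_iff.mp hU
    simpa [Matrix.star_eq_conjTranspose] using this
  have hKK : Kᴴ * K = 1 := by
    rw [hKH, hKdef, Matrix.mul_assoc, ← Matrix.mul_assoc U Uᴴ Q, hUU, Matrix.one_mul, hQQ]
  have hAeq : A = S * (U * D * Uᴴ) * S := by
    have h1 : S * S⁻¹ = 1 := Matrix.mul_nonsing_inv _ hSdetu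
    have h2 : S⁻¹ * S = 1 := Matrix.nonsing_inv_mul _ hSdetu
    have h3 : S * (S⁻¹ * A * S⁻¹) * S = A := by
      calc S * (S⁻¹ * A * S⁻¹) * S = (S * S⁻¹) * (A * (S⁻¹ * S)) := by
            simp only [Matrix.mul_assoc]
      _ = A := by rw [h1, h2, one_mul, mul_one]
    rw [← h3, hC]
  have hAV : Vᴴ * A * V = Wᴴ * (U * D * Uᴴ) * W := by
    rw [hAeq, hWH, hWdef]; simp only [Matrix.mul_assoc]
  have e3 : R * (Wᴴ * (U * D * Uᴴ) * W) * R = Kᴴ * D * K := by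
    rw [hKH, hQH, hKdef, hQdef]
    simp only [Matrix.mul_assoc]
  have htr : Matrix.trace (G⁻¹ * (Vᴴ * A * V)) = Matrix.trace (Kᴴ * D * K) := by
    rw [hAV, ← hRR, Matrix.mul_assoc, Matrix.trace_mul_comm, e3]
  -- Analysis of K
  set t : Fin M → ℝ := fun i => ∑ j, Complex.normSq (K i j) with htdef
  have hterm : ∀ (i : Fin M) (j : Fin T),
      star (K i j) * K i j = (Complex.normSq (K i j) : ℂ) := by
    intro i j
    rw [Complex.star_def, ← Complex.normSq_eq_conj_mul_self]
  have htrace : Matrix.trace (Kᴴ * D * K) = ((∑ i, lam i * t i : ℝ) : ℂ) := by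
    calc Matrix.trace (Kᴴ * D * K) = ∑ j, ∑ i, (Kᴴ * D) j i * K i j := by
          simp [Matrix.trace, Matrix.diag, Matrix.mul_apply]
    _ = ∑ j, ∑ i, (lam i : ℂ) * ((Complex.normSq (K i j) : ℝ) : ℂ) := by
        refine Finset.sum_congr rfl fun j _ => Finset.sum_congr rfl fun i _ => ?_
        rw [hDdef, Matrix.mul_diagonal, Matrix.conjTranspose_apply]
        calc star (K i j) * (lam i : ℂ) * K i j
            = (lam i : ℂ) * (star (K i j) * K i j) := by ring
        _ = (lam i : ℂ) * ((Complex.normSq (K i j) : ℝ) : ℂ) := by rw [hterm]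
    _ = ∑ i, ∑ j, (lam i : ℂ) * ((Complex.normSq (K i j) : ℝ) : ℂ) := Finset.sum_comm
    _ = ((∑ i, lam i * t i : ℝ) : ℂ) := by
        push_cast [htdef, Finset.mul_sum]
        norm_num
  have hsumt : ∑ i, t i = (T : ℝ) := by
    have h1 : Matrix.trace (Kᴴ * K) = (T : ℂ) := by
      rw [hKK, Matrix.trace_one]; simp
    have h2 : Matrix.trace (Kᴴ * K) = ((∑ i, t i : ℝ) : ℂ) := by
      calc Matrix.trace (Kᴴ * K) = ∑ j, ∑ i, star (K i j) * K i j := by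
            simp [Matrix.trace, Matrix.diag, Matrix.mul_apply, Matrix.conjTranspose_apply]
      _ = ∑ j, ∑ i, ((Complex.normSq (K i j) : ℝ) : ℂ) :=
          Finset.sum_congr rfl fun j _ => Finset.sum_congr rfl fun i _ => hterm i j
      _ = ∑ i, ∑ j, ((Complex.normSq (K i j) : ℝ) : ℂ) := Finset.sum_comm
      _ = ((∑ i, t i : ℝ) : ℂ) := by push_cast [htdef]; norm_num
    exact Complex.ofReal_inj.mp (h2.symm.trans h1)
  have ht0 : ∀ i, 0 ≤ t i := fun i => Finset.sum_nonneg fun j _ => Complex.normSq_nonneg _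
  have ht1 : ∀ i, t i ≤ 1 := by
    set P : Matrix (Fin M) (Fin M) ℂ := K * Kᴴ with hPdef
    have hPH : Pᴴ = P := Matrix.isHermitian_mul_conjTranspose_self K
    have hPP : P * P = P := by
      rw [hPdef, Matrix.mul_assoc, ← Matrix.mul_assoc Kᴴ K Kᴴ, hKK, Matrix.one_mul]
    have h1P : (1 - P).PosSemidef := by
      have hfact : (1 - P)ᴴ * (1 - P) = 1 - P := by
        rw [Matrix.conjTranspose_sub, Matrix.conjTranspose_one, hPH]
        calc (1 - P) * (1 - P) = 1 - P - P + P * P := by noncomm_ring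
        _ = 1 - P := by rw [hPP]; noncomm_ring
      rw [← hfact]; exact Matrix.posSemidef_conjTranspose_mul_self _
    intro i
    have hnn := h1P.dotProduct_mulVec_nonneg (Pi.single i 1)
    have hdot : star (Pi.single i 1 : Fin M → ℂ) ⬝ᵥ ((1 - P) *ᵥ Pi.single i 1)
        = 1 - (t i : ℂ) := by
      have hPii : P i i = (t i : ℂ) := by
        rw [hPdef]
        simp only [Matrix.mul_apply, Matrix.conjTranspose_apply, htdef]
        push_cast
        exact Finset.sum_congr rfl fun j _ => by rw [Complex.star_def, Complex.mul_conj]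
      have hstar : star (Pi.single i 1 : Fin M → ℂ) = Pi.single i 1 := by
        ext k; simp [Pi.single_apply, apply_ite]
      rw [hstar, single_dotProduct, one_mul, Matrix.mulVec_single]
      show (1 - P) i i * 1 = _
      rw [mul_one, Matrix.sub_apply, Matrix.one_apply_eq, hPii]
    rw [hdot] at hnn
    have hc : (0:ℂ) ≤ ((1 - t i : ℝ) : ℂ) := by push_cast; convert hnn using 1
    have := Complex.zero_le_real.mp hc
    linarith
  rw [htr, htrace]
  exact Complex.real_le_real.mpr (keyfan_real_aux hTM lam t hdec ht0 ht1 hsumt)
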